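/- Let A be a weak*-closed unital subalgebra of the multiplier algebra of an RKHS H on X, let g, h ∈ H be nonvanishing, let H_g = [A g], H_h = [A h], and let S : H_g → H_h be a bounded invertible operator with S M_f = M_f S for all f ∈ A. Then there exists a function φ : X → ℂ such that S* k_x^h = conj(φ(x)) k_x^g for all x ∈ X, where k_x^g, k_x^h are the kernel vectors of H_g, H_h. -/

import Mathlib

open scoped ENNReal

local notation "⟪" x ", " y "⟫" => @inner ℂ _ _ x y

/-- The weak* topology on `B(H₁,H₂)` coming from its duality with trace class operators. -/
noncomputable def weakStar (H₁ H₂ : Type*) [NormedAddCommGroup H₁] [InnerProductSpace ℂ H₁]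
    [CompleteSpace H₁] [NormedAddCommGroup H₂] [InnerProductSpace ℂ H₂] [CompleteSpace H₂] :
    TopologicalSpace (H₁ →L[ℂ] H₂) :=
  TopologicalSpace.induced
    (fun A => fun p : (lp (fun _ : ℕ => H₁) 2) × (lp (fun _ : ℕ => H₂) 2) =>
      ∑' j, ⟪(p.2 : ∀ _ : ℕ, H₂) j, A ((p.1 : ∀ _ : ℕ, H₁) j)⟫)
    Pi.topologicalSpace

/-- Let `A` be a weak*-closed unital subalgebra of the multiplier algebra of an RKHS `H` on
`X` (with kernel vectors `k x`), let `g, h ∈ H` be nonvanishing, `H_g = [A g]`,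
`H_h = [A h]`, and let `S : H_g → H_h` be a bounded invertible operator intertwining the
action of `A`.  Then there is `φ : X → ℂ` with `S* k_x^h = conj (φ x) • k_x^g` for all `x`,
where `k_x^g, k_x^h` are the kernel vectors of `H_g, H_h`. -/
theorem stmt_17 {X H : Type*} [NormedAddCommGroup H] [InnerProductSpace ℂ H] [CompleteSpace H]
    (k : X → H)
    (htot : (Submodule.span ℂ (Set.range k)).topologicalClosure = ⊤)
    (A : Set (H →L[ℂ] H))
    (hA1 : ContinuousLinearMap.id ℂ H ∈ A)
    (hAadd : ∀ M ∈ A, ∀ N ∈ A, M + N ∈ A)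
    (hAsmul : ∀ (c : ℂ), ∀ M ∈ A, c • M ∈ A)
    (hAcomp : ∀ M ∈ A, ∀ N ∈ A, M.comp N ∈ A)
    (hAclosed : @IsClosed _ (weakStar H H) A)
    (hAm : ∀ M ∈ A, ∃ f : X → ℂ, ∀ x,
      ContinuousLinearMap.adjoint M (k x) = (starRingEnd ℂ) (f x) • k x)
    (g h : H) (hg : ∀ x, ⟪k x, g⟫ ≠ 0) (hh : ∀ x, ⟪k x, h⟫ ≠ 0)
    (Hg Hh : Submodule ℂ H) [CompleteSpace Hg] [CompleteSpace Hh]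
    (hHg : Hg = (Submodule.span ℂ {w | ∃ M ∈ A, w = M g}).topologicalClosure)
    (hHh : Hh = (Submodule.span ℂ {w | ∃ M ∈ A, w = M h}).topologicalClosure)
    (hAg : ∀ M ∈ A, ∀ v ∈ Hg, M v ∈ Hg)
    (hAh : ∀ M ∈ A, ∀ v ∈ Hh, M v ∈ Hh)
    (S : Hg ≃L[ℂ] Hh)
    (hcomm : ∀ (M : H →L[ℂ] H) (hM : M ∈ A) (v : Hg),
      (S ⟨M ↑v, hAg M hM _ v.2⟩ : H) = M ↑(S v))
    (kg : X → Hg) (kh : X → Hh)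
    (hkg : ∀ x, ∀ v : Hg, ⟪(kg x : H), (v : H)⟫ = ⟪k x, (v : H)⟫)
    (hkh : ∀ x, ∀ v : Hh, ⟪(kh x : H), (v : H)⟫ = ⟪k x, (v : H)⟫) :
    ∃ φ : X → ℂ, ∀ x,
      ContinuousLinearMap.adjoint (S : Hg →L[ℂ] Hh) (kh x)
        = (starRingEnd ℂ) (φ x) • kg x := by

  classical
  have hgmem : g ∈ Hg := by
    rw [hHg]
    exact Submodule.le_topologicalClosure _
      (Submodule.subset_span ⟨ContinuousLinearMap.id ℂ H, hA1, rfl⟩)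
  set g' : Hg := ⟨g, hgmem⟩ with hg'
  refine ⟨fun x => ⟪k x, ((S g' : Hh) : H)⟫ / ⟪k x, g⟫, fun x => ?_⟩
  set lam : ℂ := ⟪k x, ((S g' : Hh) : H)⟫ / ⟪k x, g⟫ with hlamdef
  have hlam : lam * ⟪k x, g⟫ = ⟪k x, ((S g' : Hh) : H)⟫ :=
    div_mul_cancel₀ _ (hg x)
  -- the functional D v = ⟪k x, S v⟫ - lam * ⟪k x, v⟫
  let D : Hg →L[ℂ] ℂ :=
    ((innerSL ℂ (k x)).comp (Hh.subtypeL.comp (S : Hg →L[ℂ] Hh))) -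
      lam • ((innerSL ℂ (k x)).comp Hg.subtypeL)
  have hD : ∀ v : Hg, D v = ⟪k x, ((S v : Hh) : H)⟫ - lam * ⟪k x, (v : H)⟫ := by
    intro v; rfl
  have hgen : ∀ M (hM : M ∈ A), D ⟨M g, hAg M hM g hgmem⟩ = 0 := by
    intro M hM
    obtain ⟨f, hf⟩ := hAm M hM
    have hM1 : ∀ u : H, ⟪k x, M u⟫ = f x * ⟪k x, u⟫ := by
      intro u
      rw [← ContinuousLinearMap.adjoint_inner_left, hf x, inner_smul_left]
      simp
    have hS : (S ⟨M g, hAg M hM g hgmem⟩ : H) = M ((S g' : Hh) : H) := hcomm M hM g'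
    rw [hD, hS, hM1, hM1, ← hlam]
    ring
  -- kernel of D is closed & complete, its image in H is closed and contains the span
  have hker_closed : IsClosed ((LinearMap.ker (D : Hg →ₗ[ℂ] ℂ) : Submodule ℂ Hg) : Set Hg) := by
    have : ((LinearMap.ker (D : Hg →ₗ[ℂ] ℂ) : Submodule ℂ Hg) : Set Hg) = D ⁻¹' {0} := by
      ext v; simp [LinearMap.mem_ker]
    rw [this]
    exact isClosed_singleton.preimage D.continuous
  have hker_complete : IsComplete ((LinearMap.ker (D : Hg →ₗ[ℂ] ℂ) : Submodule ℂ Hg) : Set Hg) :=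
    hker_closed.isComplete
  set K : Submodule ℂ H := (LinearMap.ker (D : Hg →ₗ[ℂ] ℂ)).map Hg.subtype with hK
  have hKcoe : (K : Set H) = Subtype.val '' ((LinearMap.ker (D : Hg →ₗ[ℂ] ℂ) : Submodule ℂ Hg) : Set Hg) := rfl
  have hKclosed : IsClosed (K : Set H) := by
    rw [hKcoe]
    exact ((isComplete_image_iff isometry_subtype_coe.isUniformInducing).2
      hker_complete).isClosed
  have hspan : Submodule.span ℂ {w | ∃ M ∈ A, w = M g} ≤ K := by
    rw [Submodule.span_le]
    rintro w ⟨M, hM, rfl⟩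
    exact ⟨⟨M g, hAg M hM g hgmem⟩, hgen M hM, rfl⟩
  have hHgK : Hg ≤ K := by
    rw [hHg]
    exact Submodule.topologicalClosure_minimal _ hspan hKclosed
  have hDzero : ∀ v : Hg, D v = 0 := by
    intro v
    obtain ⟨w, hw, hwv⟩ := hHgK v.2
    have : w = v := Subtype.ext hwv
    rw [← this]; exact hw
  have key : ∀ v : Hg, ⟪k x, ((S v : Hh) : H)⟫ = lam * ⟪k x, (v : H)⟫ := by
    intro v
    have h0 := hDzero v
    rw [hD] at h0
    exact sub_eq_zero.mp h0
  -- finish: compare inner products against all v in Hg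
  apply ext_inner_right ℂ
  intro v
  rw [ContinuousLinearMap.adjoint_inner_left]
  simp only [ContinuousLinearEquiv.coe_coe, Submodule.coe_inner, Submodule.coe_smul]
  rw [hkh x (S v), key v, inner_smul_left]
  simp only [starRingEnd_apply, star_star]
  rw [hkg x v]
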